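/- If 0<q<1, b≠0, then for every complex z with z ≠ b^{-1}q^{-k} for all k ≥ 0, one has 1/(bz;q)_∞ = (1/(q;q)_∞) · Σ_{k=0}^∞ (-1)^k q^{k(k+1)/2} / ((q;q)_k (1 - z b q^k)). -/

import Mathlib

open Finset Filter Topology

/-- The infinite q-Pochhammer symbol `(x;q)_∞ = ∏_{n≥0} (1 - x q^n)`. -/
noncomputable def qp (q x : ℂ) : ℂ := ∏' n : ℕ, (1 - x * q ^ n)

/-- The finite q-Pochhammer symbol `(x;q)_k = ∏_{j<k} (1 - x q^j)`. -/
noncomputable def qpF (q x : ℂ) (k : ℕ) : ℂ := ∏ j ∈ Finset.range k, (1 - x * q ^ j)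

lemma gauss (k : ℕ) : ∑ j ∈ Finset.range k, (j+1) = k*(k+1)/2 := by
  have h : 2 * (∑ j ∈ Finset.range k, (j+1)) = k*(k+1) := by
    induction k with
    | zero => simp
    | succ k ih => rw [Finset.sum_range_succ, Nat.mul_add, ih]; ring
  omega

lemma prod_lb (s : Finset ℕ) (f : ℕ → ℝ) (h0 : ∀ i ∈ s, 0 ≤ f i) (h1 : ∀ i ∈ s, f i ≤ 1) :
    1 - ∑ i ∈ s, f i ≤ ∏ i ∈ s, (1 - f i) := by
  induction s using Finset.cons_induction with
  | empty => simp
  | cons a s ha ih =>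
    rw [Finset.prod_cons, Finset.sum_cons]
    have h0' : ∀ i ∈ s, 0 ≤ f i := fun i hi => h0 i (Finset.mem_cons_of_mem hi)
    have h1' : ∀ i ∈ s, f i ≤ 1 := fun i hi => h1 i (Finset.mem_cons_of_mem hi)
    have hP : (0:ℝ) ≤ ∏ i ∈ s, (1 - f i) :=
      Finset.prod_nonneg fun i hi => by linarith [h1' i hi]
    have ha0 := h0 a (Finset.mem_cons_self a s)
    have ha1 := h1 a (Finset.mem_cons_self a s)
    have hsig : (0:ℝ) ≤ ∑ i ∈ s, f i := Finset.sum_nonneg h0'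
    have key : (1 - f a) * (1 - ∑ i ∈ s, f i) ≤ (1 - f a) * ∏ i ∈ s, (1 - f i) :=
      mul_le_mul_of_nonneg_left (ih h0' h1') (by linarith)
    nlinarith [key]

lemma Dfact (q : ℝ) (hq0 : 0 < q) (hq1 : q < 1) (n k : ℕ) (hk : k < n) :
    ∏ j ∈ (Finset.range n).erase k, (1 - (q:ℂ)^j * ((q:ℂ)^k)⁻¹)
      = (-1)^k * ((q:ℂ)^(k*(k+1)/2))⁻¹ * (qpF q q k * qpF q q (n-1-k)) := by
  set c := (q:ℂ) with hc
  have hc0 : c ≠ 0 := by simp [hc, Complex.ofReal_ne_zero]; exact hq0.ne'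
  have hsplit : (Finset.range n).erase k = Finset.range k ∪ Finset.Ico (k+1) n := by
    ext j; simp only [Finset.mem_erase, Finset.mem_range, Finset.mem_union, Finset.mem_Ico]; omega
  have hdisj : Disjoint (Finset.range k) (Finset.Ico (k+1) n) := by
    simp only [Finset.disjoint_left, Finset.mem_range, Finset.mem_Ico]; omega
  rw [hsplit, Finset.prod_union hdisj]
  have hA : ∏ j ∈ Finset.range k, (1 - c^j * (c^k)⁻¹)
      = (-1)^k * (c^(k*(k+1)/2))⁻¹ * qpF q q k := by
    rw [← Finset.prod_range_reflect]
    have hcong : ∀ j ∈ Finset.range k, (1 - c^(k-1-j) * (c^k)⁻¹)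
        = -(c^(j+1))⁻¹ * (1 - c^(j+1)) := by
      intro j hj
      have hjk := Finset.mem_range.mp hj
      have h1 : c^(k-1-j) * c^(j+1) = c^k := by rw [← pow_add]; congr 1; omega
      have h2 : c^(j+1) ≠ 0 := pow_ne_zero _ hc0
      have h3 : c^k ≠ 0 := pow_ne_zero _ hc0
      field_simp
      linear_combination -h1
    rw [Finset.prod_congr rfl hcong]
    have : ∀ j ∈ Finset.range k, -(c^(j+1))⁻¹ * (1 - c^(j+1))
        = ((-1) * (c^(j+1))⁻¹) * (1 - c^(j+1)) := by intro j _; ring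
    rw [Finset.prod_congr rfl this]
    simp only [Finset.prod_mul_distrib, Finset.prod_const, Finset.card_range,
      Finset.prod_inv_distrib, Finset.prod_pow_eq_pow_sum, gauss]
    have : qpF q q k = ∏ j ∈ Finset.range k, (1 - c^(j+1)) := by
      unfold qpF
      exact Finset.prod_congr rfl fun j _ => by rw [pow_succ']
    rw [this]
  have hB : ∏ j ∈ Finset.Ico (k+1) n, (1 - c^j * (c^k)⁻¹) = qpF q q (n-1-k) := by
    rw [Finset.prod_Ico_eq_prod_range]
    have hcong : ∀ i ∈ Finset.range (n - (k+1)), (1 - c^(k+1+i) * (c^k)⁻¹)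
        = 1 - c * c^i := by
      intro i _
      have h1 : c^(k+1+i) = c^k * (c * c^i) := by rw [← pow_succ', ← pow_add]; congr 1; omega
      rw [h1]
      field_simp
    rw [Finset.prod_congr rfl hcong]
    have : n - (k+1) = n - 1 - k := by omega
    rw [this]; rfl
  rw [hA, hB]; ring

lemma finKey (q : ℝ) (hq0 : 0 < q) (hq1 : q < 1) (x : ℂ)
    (hx : ∀ k : ℕ, 1 - x * (q:ℂ)^k ≠ 0) (n : ℕ) (hn : 0 < n) :
    qpF q x n * (∑ k ∈ Finset.range n,
      (-1)^k * (q:ℂ)^(k*(k+1)/2) / (qpF q q k * qpF q q (n-1-k) * (1 - x * (q:ℂ)^k))) = 1 := by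
  set c := (q:ℂ) with hcdef
  have hc0 : c ≠ 0 := by
    simp only [hcdef, ne_eq, Complex.ofReal_eq_zero]; exact hq0.ne'
  have hpow_inj : Function.Injective fun k : ℕ => c^k := by
    intro i j hij
    have : (q:ℝ)^i = (q:ℝ)^j := by
      have := congrArg Complex.re hij
      simpa [hcdef, ← Complex.ofReal_pow] using this
    exact pow_right_injective₀ hq0 hq1.ne (by exact_mod_cast this)
  have hqpF_ne : ∀ m : ℕ, qpF q q m ≠ 0 := by
    intro m
    unfold qpF
    refine Finset.prod_ne_zero_iff.mpr fun j _ => ?_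
    have h1 : (q:ℝ)^(j+1) < 1 := pow_lt_one₀ hq0.le hq1 (by omega)
    have : (1:ℂ) - c * c^j = ((1 - q^(j+1) : ℝ) : ℂ) := by push_cast [pow_succ']; ring
    rw [this]
    exact_mod_cast (by linarith : (0:ℝ) < 1 - q^(j+1)).ne'
  set v : ℕ → ℂ := fun k => (c^k)⁻¹ with hvdef
  have hvinj : Function.Injective v := fun i j hij => hpow_inj (inv_injective hij)
  have hsum := Lagrange.sum_basis (s := Finset.range n) (v := v) hvinj.injOn
    ⟨0, Finset.mem_range.mpr hn⟩
  have heval := congrArg (Polynomial.eval x) hsum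
  rw [Polynomial.eval_finset_sum, Polynomial.eval_one] at heval
  have hterm : ∀ k ∈ Finset.range n, Polynomial.eval x (Lagrange.basis (Finset.range n) v k)
      = qpF q x n * ((-1)^k * c^(k*(k+1)/2) / (qpF q q k * qpF q q (n-1-k) * (1 - x*c^k))) := by
    intro k hk
    have hkn := Finset.mem_range.mp hk
    rw [Lagrange.basis, Polynomial.eval_prod]
    have hfac : ∀ j ∈ (Finset.range n).erase k,
        Polynomial.eval x (Lagrange.basisDivisor (v k) (v j))
          = (1 - x * c^j) / (1 - c^j * (c^k)⁻¹) := by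
      intro j hj
      have hjk : j ≠ k := (Finset.mem_erase.mp hj).1
      have hck : c^k ≠ 0 := pow_ne_zero _ hc0
      have hcj : c^j ≠ 0 := pow_ne_zero _ hc0
      have hne : c^j ≠ c^k := fun h => hjk (hpow_inj h)
      have hd1 : v k - v j ≠ 0 := sub_ne_zero.mpr fun h => hjk (hvinj h).symm
      have hd2 : 1 - c^j * (c^k)⁻¹ ≠ 0 := by
        intro h
        apply hne
        have := sub_eq_zero.mp h
        field_simp at this
        rw [this]
      simp only [Lagrange.basisDivisor, Polynomial.eval_mul, Polynomial.eval_C,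
        Polynomial.eval_sub, Polynomial.eval_X]
      have hsub0 : c^j - c^k ≠ 0 := sub_ne_zero.mpr hne
      have hsub : v k - v j = (c^j - c^k) / (c^j * c^k) := by
        simp only [hvdef]
        field_simp
      rw [hsub, inv_div]
      simp only [hvdef]
      rw [div_mul_eq_mul_div, div_eq_div_iff hsub0 hd2]
      field_simp
      ring
    rw [Finset.prod_congr rfl hfac, Finset.prod_div_distrib,
      Dfact q hq0 hq1 n k hkn]
    have hprodnum : (∏ j ∈ (Finset.range n).erase k, (1 - x * c^j)) * (1 - x * c^k)
        = qpF q x n := Finset.prod_erase_mul _ _ hk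
    have hck : (1 : ℂ) - x * c^k ≠ 0 := hx k
    have hK1 : qpF q q k ≠ 0 := hqpF_ne k
    have hK2 : qpF q q (n-1-k) ≠ 0 := hqpF_ne (n-1-k)
    have hE : c^(k*(k+1)/2) ≠ 0 := pow_ne_zero _ hc0
    have hm1 : ((-1:ℂ))^k * ((-1:ℂ))^k = 1 := by
      rw [← pow_add]; exact Even.neg_one_pow ⟨k, by ring⟩
    rw [← hprodnum]
    set P := ∏ j ∈ (Finset.range n).erase k, (1 - x * c^j) with hP
    rw [div_eq_iff (mul_ne_zero (mul_ne_zero (pow_ne_zero _ (by norm_num)) (inv_ne_zero hE))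
      (mul_ne_zero hK1 hK2))]
    field_simp
    ring_nf
    have h2 : ((-1:ℂ))^(k*2) = 1 := by rw [mul_comm, pow_mul]; norm_num
    rw [h2]
    ring
  rw [Finset.sum_congr rfl hterm, ← Finset.mul_sum] at heval
  exact heval

theorem stmt3 (q : ℝ) (hq0 : 0 < q) (hq1 : q < 1) (b z : ℂ) (hb : b ≠ 0)
    (hz : ∀ k : ℕ, z ≠ b⁻¹ * (q : ℂ) ^ (-(k : ℤ))) :
    1 / qp q (b * z) =
      (1 / qp q q) * ∑' k : ℕ,
        (-1) ^ k * (q : ℂ) ^ (k * (k + 1) / 2) /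
          (qpF q q k * (1 - z * b * (q : ℂ) ^ k)) := by
  have hbz : b * z = z * b := mul_comm b z
  rw [hbz]
  set c : ℂ := (q:ℂ) with hcdef
  set x : ℂ := z * b with hxdef
  have hc0 : c ≠ 0 := by
    simp only [hcdef, ne_eq, Complex.ofReal_eq_zero]; exact hq0.ne'
  have hcnorm : ‖c‖ = q := by
    simp only [hcdef, Complex.norm_real]; exact abs_of_pos hq0
  -- nonvanishing of the factors 1 - x c^k
  have hx : ∀ k : ℕ, 1 - x * c^k ≠ 0 := by
    intro k h
    apply hz k
    have h1 : z * (b * c^k) = 1 := by rw [← mul_assoc]; linear_combination -h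
    have h2 : z = (b * c^k)⁻¹ := eq_inv_of_mul_eq_one_left h1
    rw [h2, mul_inv, zpow_neg, zpow_natCast]
  have hqne : ∀ n : ℕ, (1:ℂ) - c * c^n ≠ 0 := by
    intro n
    have h1 : q^(n+1) < 1 := pow_lt_one₀ hq0.le hq1 (by omega)
    have h2 : (1:ℂ) - c*c^n = ((1 - q^(n+1) : ℝ) : ℂ) := by push_cast [pow_succ']; ring
    rw [h2]
    exact_mod_cast (by linarith : (0:ℝ) < 1 - q^(n+1)).ne'
  -- summability of logs and multipliability
  have hlog : ∀ y : ℂ, Summable fun n : ℕ => Complex.log (1 - y * c^n) := by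
    intro y
    apply Summable.of_norm_bounded_eventually (g := fun n => 3/2 * ‖y‖ * q^n)
      (((summable_geometric_of_lt_one hq0.le hq1).mul_left (3/2 * ‖y‖)).congr (fun n => by ring))
    rw [Nat.cofinite_eq_atTop]
    have ht : Tendsto (fun n : ℕ => ‖y‖ * q^n) atTop (𝓝 0) := by
      have := (tendsto_pow_atTop_nhds_zero_of_lt_one hq0.le hq1).const_mul ‖y‖
      simpa using this
    filter_upwards [ht.eventually (eventually_le_nhds one_half_pos)] with n hn
    have hnrm : ‖-(y * c^n)‖ = ‖y‖ * q^n := by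
      rw [norm_neg, norm_mul, norm_pow, hcnorm]
    have := Complex.norm_log_one_add_half_le_self (z := -(y * c^n)) (by rw [hnrm]; exact hn)
    rw [← sub_eq_add_neg] at this
    rw [hnrm] at this
    calc ‖Complex.log (1 - y * c^n)‖ ≤ 3/2 * (‖y‖ * q^n) := this
      _ = 3/2 * ‖y‖ * q^n := by ring
  have hmul : ∀ y : ℂ, (∀ n : ℕ, (1:ℂ) - y * c^n ≠ 0) →
      Multipliable fun n : ℕ => 1 - y * c^n := by
    intro y hy
    exact Complex.multipliable_of_summable_log (hlog y)
  have hPx : Tendsto (fun n => qpF q x n) atTop (𝓝 (qp q x)) := by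
    simpa [qp, qpF] using ((hmul x hx).hasProd).tendsto_prod_nat
  have hPq : Tendsto (fun n => qpF q q n) atTop (𝓝 (qp q q)) := by
    simpa [qp, qpF] using ((hmul c hqne).hasProd).tendsto_prod_nat
  -- uniform lower bound δ on the real partial products
  set Pr : ℕ → ℝ := fun m => ∏ j ∈ Finset.range m, (1 - q^(j+1)) with hPrdef
  have hfach : ∀ j : ℕ, 0 < 1 - q^(j+1) := by
    intro j
    have := pow_lt_one₀ hq0.le hq1 (n := j+1) (by omega)
    linarith
  have hPrpos : ∀ m, 0 < Pr m := fun m => Finset.prod_pos fun j _ => hfach j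
  have hPrcast : ∀ m, ((Pr m : ℝ) : ℂ) = qpF q q m := by
    intro m
    rw [hPrdef]
    push_cast
    exact Finset.prod_congr rfl fun j _ => by rw [pow_succ']
  obtain ⟨M, hM⟩ : ∃ M : ℕ, q^M < (1-q)/2 :=
    ((tendsto_pow_atTop_nhds_zero_of_lt_one hq0.le hq1).eventually
      (eventually_lt_nhds (by linarith))).exists
  have hsum_tail : ∀ m : ℕ, ∑ j ∈ Finset.Ico M m, q^(j+1) ≤ 1/2 := by
    intro m
    rw [Finset.sum_Ico_eq_sum_range]
    have h1 : ∀ i ∈ Finset.range (m - M), q^(M + i + 1) = q^(M+1) * q^i := by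
      intro i _; rw [← pow_add]; congr 1; omega
    rw [Finset.sum_congr rfl h1, ← Finset.mul_sum]
    have h2 : ∑ i ∈ Finset.range (m - M), q^i ≤ (1-q)⁻¹ := by
      have := Summable.sum_le_tsum (Finset.range (m-M)) (fun i _ => pow_nonneg hq0.le i)
        (summable_geometric_of_lt_one hq0.le hq1)
      rwa [tsum_geometric_of_lt_one hq0.le hq1] at this
    have h3 : q^(M+1) ≤ (1-q)/2 := by
      calc q^(M+1) ≤ q^M := pow_le_pow_of_le_one hq0.le hq1.le (by omega)
        _ ≤ (1-q)/2 := hM.le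
    have h1q : (0:ℝ) < 1 - q := by linarith
    calc q^(M+1) * ∑ i ∈ Finset.range (m - M), q^i
        ≤ q^(M+1) * (1-q)⁻¹ := mul_le_mul_of_nonneg_left h2 (pow_nonneg hq0.le _)
      _ ≤ (1-q)/2 * (1-q)⁻¹ := mul_le_mul_of_nonneg_right h3 (by positivity)
      _ = 1/2 := by field_simp
  have hδ : ∀ m, Pr M / 2 ≤ Pr m := by
    intro m
    rcases le_or_gt m M with h | h
    · have h1 : Pr M ≤ Pr m := by
        show (∏ j ∈ Finset.range M, (1 - q^(j+1))) ≤ ∏ j ∈ Finset.range m, (1 - q^(j+1))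
        rw [← Finset.prod_range_mul_prod_Ico _ h]
        have h2 : ∏ j ∈ Finset.Ico m M, (1 - q^(j+1)) ≤ 1 :=
          Finset.prod_le_one (fun j _ => (hfach j).le) (fun j _ => by
            have := pow_nonneg hq0.le (j+1); linarith)
        calc (∏ j ∈ Finset.range m, (1 - q^(j+1))) * ∏ j ∈ Finset.Ico m M, (1 - q^(j+1))
            ≤ (∏ j ∈ Finset.range m, (1 - q^(j+1))) * 1 :=
              mul_le_mul_of_nonneg_left h2 (hPrpos m).le
          _ = Pr m := by rw [mul_one]
      linarith [hPrpos M]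
    · have hrw : Pr m = Pr M * ∏ j ∈ Finset.Ico M m, (1 - q^(j+1)) := by
        simp only [hPrdef]; exact (Finset.prod_range_mul_prod_Ico _ h.le).symm
      have h12 : (1:ℝ)/2 ≤ ∏ j ∈ Finset.Ico M m, (1 - q^(j+1)) := by
        have := prod_lb (Finset.Ico M m) (fun j => q^(j+1))
          (fun j _ => pow_nonneg hq0.le _)
          (fun j _ => by have := pow_nonneg hq0.le (j+1); have := hfach j; linarith)
        have h2 := hsum_tail m
        linarith
      rw [hrw]
      calc Pr M / 2 = Pr M * (1/2) := by ring
        _ ≤ Pr M * ∏ j ∈ Finset.Ico M m, (1 - q^(j+1)) :=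
            mul_le_mul_of_nonneg_left h12 (hPrpos M).le
  set δ : ℝ := Pr M / 2 with hδdef
  have hδ0 : 0 < δ := by have := hPrpos M; rw [hδdef]; linarith
  have hδc : ∀ m, δ ≤ ‖qpF q q m‖ := by
    intro m
    have hnn : ‖qpF q q m‖ = Pr m := by
      rw [← hPrcast m, Complex.norm_real]
      exact abs_of_pos (hPrpos m)
    rw [hnn]
    exact hδ m
  have hqpFq_ne : ∀ m, qpF q q m ≠ 0 := by
    intro m h
    have := hδc m
    rw [h, norm_zero] at this
    linarith
  have hqq_norm : δ ≤ ‖qp q q‖ := ge_of_tendsto' hPq.norm (fun m => hδc m)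
  have hqq0 : qp q q ≠ 0 := by
    intro h; rw [h, norm_zero] at hqq_norm; linarith
  -- uniform lower bound ε on ‖1 - x c^k‖
  have hc_lt : ‖c‖ < 1 := by rw [hcnorm]; exact hq1
  have hx_t : Tendsto (fun k : ℕ => 1 - x * c^k) atTop (𝓝 1) := by
    have h0 : Tendsto (fun k : ℕ => c^k) atTop (𝓝 0) :=
      tendsto_pow_atTop_nhds_zero_of_norm_lt_one hc_lt
    have := tendsto_const_nhds (x := (1:ℂ)) (f := atTop (α := ℕ)) |>.sub
      ((tendsto_const_nhds (x := x) (f := atTop (α := ℕ))).mul h0)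
    simpa using this
  have hev2 : ∀ᶠ k in atTop, (1:ℝ)/2 < ‖1 - x*c^k‖ := by
    have h12 : (1:ℝ)/2 < ‖(1:ℂ)‖ := by rw [norm_one]; norm_num
    exact hx_t.norm.eventually (eventually_gt_nhds h12)
  obtain ⟨N, hN⟩ := eventually_atTop.mp hev2
  set T : Finset ℝ := insert (1/2) ((Finset.range N).image fun k => ‖1 - x * c^k‖) with hTdef
  have hTne : T.Nonempty := ⟨1/2, Finset.mem_insert_self _ _⟩
  set ε : ℝ := T.min' hTne with hεdef
  have hε0 : 0 < ε := by
    have hmem := T.min'_mem hTne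
    rw [← hεdef] at hmem
    rw [hTdef] at hmem
    rcases Finset.mem_insert.mp hmem with h | h
    · rw [h]; norm_num
    · obtain ⟨k, _, hk⟩ := Finset.mem_image.mp h
      rw [← hk]
      exact norm_pos_iff.mpr (hx k)
  have hεle : ∀ k, ε ≤ ‖1 - x * c^k‖ := by
    intro k
    rcases lt_or_ge k N with h | h
    · exact T.min'_le _ (Finset.mem_insert_of_mem
        (Finset.mem_image_of_mem _ (Finset.mem_range.mpr h)))
    · have h1 := hN k h
      have h2 : ε ≤ 1/2 := T.min'_le _ (Finset.mem_insert_self _ _)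
      linarith
  -- dominated convergence setup
  set f : ℕ → ℕ → ℂ := fun n k => if k < n then
    (-1)^k * c^(k*(k+1)/2) / (qpF q q k * qpF q q (n-1-k) * (1 - x * c^k)) else 0 with hfdef
  set g : ℕ → ℂ := fun k =>
    (-1)^k * c^(k*(k+1)/2) / (qpF q q k * qp q q * (1 - x * c^k)) with hgdef
  have h_bound : ∀ n k, ‖f n k‖ ≤ q^k / (δ*δ*ε) := by
    intro n k
    by_cases h : k < n
    · rw [hfdef]
      simp only [if_pos h]
      rw [norm_div]
      have hnum : ‖(-1:ℂ)^k * c^(k*(k+1)/2)‖ = q^(k*(k+1)/2) := by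
        rw [norm_mul, norm_pow, norm_pow, norm_neg, norm_one, one_pow, one_mul, hcnorm]
      have hden : δ*δ*ε ≤ ‖qpF q q k * qpF q q (n-1-k) * (1 - x*c^k)‖ := by
        rw [norm_mul, norm_mul]
        exact mul_le_mul (mul_le_mul (hδc k) (hδc (n-1-k)) hδ0.le (norm_nonneg _))
          (hεle k) hε0.le (by positivity)
      rw [hnum]
      have hEk : k ≤ k*(k+1)/2 := by
        rcases Nat.eq_zero_or_pos k with hk0 | hk0
        · simp [hk0]
        · exact (Nat.le_div_iff_mul_le (by norm_num)).mpr (Nat.mul_le_mul_left k (by omega))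
      exact div_le_div₀ (pow_nonneg hq0.le k)
        (pow_le_pow_of_le_one hq0.le hq1.le hEk) (by positivity) hden
    · rw [hfdef]
      simp only [if_neg h, norm_zero]
      positivity
  have h_sumbound : Summable (fun k : ℕ => q^k / (δ*δ*ε)) :=
    (summable_geometric_of_lt_one hq0.le hq1).div_const _
  have h_lim : ∀ k, Tendsto (fun n => f n k) atTop (𝓝 (g k)) := by
    intro k
    have htail : Tendsto (fun n : ℕ => qpF q q (n-1-k)) atTop (𝓝 (qp q q)) := by
      apply hPq.comp
      have h1 : (fun n : ℕ => n - 1 - k) = (fun n : ℕ => n - (1+k)) := by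
        funext n; omega
      rw [h1]
      exact tendsto_sub_atTop_nat (1+k)
    have hmain : Tendsto (fun n : ℕ =>
        (-1)^k * c^(k*(k+1)/2) / (qpF q q k * qpF q q (n-1-k) * (1 - x * c^k)))
        atTop (𝓝 (g k)) := by
      apply Tendsto.div tendsto_const_nhds
      · exact (tendsto_const_nhds.mul htail).mul tendsto_const_nhds
      · exact mul_ne_zero (mul_ne_zero (hqpFq_ne k) hqq0) (hx k)
    apply hmain.congr'
    filter_upwards [eventually_ge_atTop (k+1)] with n hn
    rw [hfdef]
    simp only [if_pos (by omega : k < n)]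
  have hdom := tendsto_tsum_of_dominated_convergence h_sumbound h_lim
    (Filter.Eventually.of_forall h_bound)
  have hfS : ∀ n, ∑' k, f n k = ∑ k ∈ Finset.range n,
      (-1)^k * c^(k*(k+1)/2) / (qpF q q k * qpF q q (n-1-k) * (1 - x * c^k)) := by
    intro n
    rw [tsum_eq_sum (s := Finset.range n) (fun k hk => by
      rw [hfdef]; exact if_neg (by simpa using hk))]
    exact Finset.sum_congr rfl fun k hk => by
      rw [hfdef]; exact if_pos (Finset.mem_range.mp hk)
  have htendS : Tendsto (fun n => ∑ k ∈ Finset.range n,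
      (-1)^k * c^(k*(k+1)/2) / (qpF q q k * qpF q q (n-1-k) * (1 - x * c^k)))
      atTop (𝓝 (∑' k, g k)) := hdom.congr (fun n => hfS n)
  have hev1 : ∀ᶠ n in atTop, qpF q x n * (∑ k ∈ Finset.range n,
      (-1)^k * c^(k*(k+1)/2) / (qpF q q k * qpF q q (n-1-k) * (1 - x * c^k))) = 1 := by
    filter_upwards [eventually_ge_atTop 1] with n hn
    exact finKey q hq0 hq1 x hx n hn
  have hone : qp q x * ∑' k, g k = 1 :=
    tendsto_nhds_unique ((hPx.mul htendS).congr' hev1) tendsto_const_nhds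
  have hfin : (qp q x)⁻¹ = ∑' k, g k := inv_eq_of_mul_eq_one_right hone
  have htsum_g : ∑' k, g k = (qp q q)⁻¹ * ∑' k : ℕ,
      (-1)^k * c^(k*(k+1)/2) / (qpF q q k * (1 - x * c^k)) := by
    rw [← tsum_mul_left]
    apply tsum_congr
    intro k
    simp only [hgdef]
    rw [div_eq_mul_inv, div_eq_mul_inv, mul_inv, mul_inv, mul_inv]
    ring
  rw [one_div, one_div, hfin, htsum_g]
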